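/- arXiv:1805.04313 — 3 statements merged into one kernel-verified Lean document; each statement's English description precedes it below -/
import Mathlib

section
/- For z₁, z₂ in the punctured plane ℂ* = ℂ∖{0}, write z₁ = r₁e^{it₁}, z₂ = r₂e^{it₂} with θ ∈ [0,π] the measure of the convex angle between z₁ and z₂. Then the quasihyperbolic distance in ℂ* with density ρ(z) = 1/|z| satisfies k(z₁,z₂) = √( (ln(r₂/r₁))² + θ² ). -/
open Complex Set MeasureTheory intervalIntegral

noncomputable def qhDist (z₁ z₂ : ℂ) : ℝ :=
  sInf {l : ℝ | ∃ γ γ' : ℝ → ℂ,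
    γ 0 = z₁ ∧ γ 1 = z₂ ∧
    (∀ t ∈ Set.Icc (0:ℝ) 1, γ t ≠ 0) ∧
    (∀ t ∈ Set.Icc (0:ℝ) 1, HasDerivAt γ (γ' t) t) ∧
    ContinuousOn γ' (Set.Icc (0:ℝ) 1) ∧
    l = ∫ t in (0:ℝ)..1, ‖γ' t‖ / ‖γ t‖}

-- auxiliary: the log-spiral curve shows membership
lemma qh_mem (z₁ z₂ : ℂ) (h₁ : z₁ ≠ 0) (h₂ : z₂ ≠ 0) :
    ‖Complex.log (z₂ / z₁)‖ ∈ {l : ℝ | ∃ γ γ' : ℝ → ℂ,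
    γ 0 = z₁ ∧ γ 1 = z₂ ∧
    (∀ t ∈ Set.Icc (0:ℝ) 1, γ t ≠ 0) ∧
    (∀ t ∈ Set.Icc (0:ℝ) 1, HasDerivAt γ (γ' t) t) ∧
    ContinuousOn γ' (Set.Icc (0:ℝ) 1) ∧
    l = ∫ t in (0:ℝ)..1, ‖γ' t‖ / ‖γ t‖} := by
  have hw0 : z₂ / z₁ ≠ 0 := div_ne_zero h₂ h₁
  set c := Complex.log (z₂ / z₁) with hc
  refine ⟨fun t => z₁ * Complex.exp (t * c), fun t => c * (z₁ * Complex.exp (t * c)),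
    ?_, ?_, ?_, ?_, ?_, ?_⟩
  · simp
  · show z₁ * Complex.exp ((1:ℝ) * c) = z₂
    rw [Complex.ofReal_one, one_mul, hc, Complex.exp_log hw0]
    field_simp
  · intro t _; exact mul_ne_zero h₁ (Complex.exp_ne_zero _)
  · intro t _
    have h1 : HasDerivAt (fun s : ℝ => (s : ℂ) * c) c t := by
      simpa using (hasDerivAt_id (t:ℝ)).ofReal_comp.mul_const c
    have := (h1.cexp.const_mul z₁)
    exact this.congr_deriv (by ring)
  · fun_prop
  · have hne : ∀ t : ℝ, ‖z₁ * Complex.exp (t * c)‖ ≠ 0 := fun t => by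
      simp [h₁, Complex.exp_ne_zero]
    have : ∀ t : ℝ, ‖c * (z₁ * Complex.exp (t * c))‖ /
        ‖z₁ * Complex.exp (t * c)‖ = ‖c‖ := by
      intro t
      rw [norm_mul, mul_div_assoc, div_self (hne t), mul_one]
    simp only [this]
    simp

lemma qh_lb (z₁ z₂ : ℂ) (h₁ : z₁ ≠ 0) (h₂ : z₂ ≠ 0)
    (γ γ' : ℝ → ℂ) (hg0 : γ 0 = z₁) (hg1 : γ 1 = z₂)
    (hne : ∀ t ∈ Set.Icc (0:ℝ) 1, γ t ≠ 0)
    (hd : ∀ t ∈ Set.Icc (0:ℝ) 1, HasDerivAt γ (γ' t) t)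
    (hc' : ContinuousOn γ' (Set.Icc (0:ℝ) 1)) :
    ‖Complex.log (z₂ / z₁)‖ ≤
      ∫ t in (0:ℝ)..1, ‖γ' t‖ / ‖γ t‖ := by
  have hw0 : z₂ / z₁ ≠ 0 := div_ne_zero h₂ h₁
  have hγcont : ContinuousOn γ (Set.Icc (0:ℝ) 1) := fun t ht =>
    (hd t ht).continuousAt.continuousWithinAt
  set f : ℝ → ℂ := fun t => γ' t / γ t with hf
  have hfc : ContinuousOn f (Set.Icc (0:ℝ) 1) := hc'.div hγcont hne
  set F : ℝ → ℂ := fun u => ∫ s in (0:ℝ)..u, f s with hF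
  have hicc : uIcc (0:ℝ) 1 = Set.Icc (0:ℝ) 1 := uIcc_of_le (by norm_num)
  have hFint : IntegrableOn f (uIcc (0:ℝ) 1) := by
    rw [hicc]; exact hfc.integrableOn_compact isCompact_Icc
  have hFcont : ContinuousOn F (Set.Icc (0:ℝ) 1) := by
    have := continuousOn_primitive_interval (a := (0:ℝ)) (b := 1) (f := f) hFint
    rwa [hicc] at this
  -- key : γ 1 * exp (-(F 1)) = γ 0
  have hgcont : ContinuousOn (fun t => γ t * Complex.exp (-(F t))) (Set.Icc (0:ℝ) 1) :=
    hγcont.mul ((hFcont.neg).cexp)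
  have hgd : ∀ x ∈ Set.Ioo (0:ℝ) 1,
      HasDerivWithinAt (fun t => γ t * Complex.exp (-(F t))) ((fun _ => (0:ℂ)) x)
        (Set.Ioi x) x := by
    intro x hx
    have hxI : x ∈ Set.Icc (0:ℝ) 1 := Set.Ioo_subset_Icc_self hx
    have hint : IntervalIntegrable f volume 0 x := by
      apply ContinuousOn.intervalIntegrable
      apply hfc.mono
      rw [uIcc_of_le hx.1.le]
      exact Set.Icc_subset_Icc le_rfl hx.2.le
    have hmeas : StronglyMeasurableAtFilter f (nhds x) volume :=
      ContinuousOn.stronglyMeasurableAtFilter isOpen_Ioo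
        (hfc.mono Set.Ioo_subset_Icc_self) x hx
    have hcontAt : ContinuousAt f x :=
      hfc.continuousAt (Icc_mem_nhds hx.1 hx.2)
    have hFd : HasDerivAt F (f x) x :=
      intervalIntegral.integral_hasDerivAt_right hint hmeas hcontAt
    have hprod : HasDerivAt (fun t => γ t * Complex.exp (-(F t)))
        (γ' x * Complex.exp (-(F x)) + γ x * (Complex.exp (-(F x)) * -f x)) x :=
      (hd x hxI).mul ((hFd.neg).cexp)
    have h0 : γ' x * Complex.exp (-(F x)) + γ x * (Complex.exp (-(F x)) * -f x) = 0 := by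
      have : γ x * f x = γ' x := mul_div_cancel₀ _ (hne x hxI)
      rw [mul_comm (Complex.exp (-(F x))) (-f x), ← mul_assoc]
      rw [mul_neg, this]
      ring
    rw [h0] at hprod
    exact hprod.hasDerivWithinAt
  have hzero : (0:ℂ) = γ 1 * Complex.exp (-(F 1)) - γ 0 * Complex.exp (-(F 0)) := by
    have := intervalIntegral.integral_eq_sub_of_hasDeriv_right_of_le (f' := fun _ => (0:ℂ))
      (by norm_num : (0:ℝ) ≤ 1) hgcont hgd intervalIntegrable_const
    simpa using this
  have hF0 : F 0 = 0 := intervalIntegral.integral_same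
  have hexp : Complex.exp (F 1) = z₂ / z₁ := by
    rw [hF0] at hzero
    simp only [neg_zero, Complex.exp_zero, mul_one, hg0, hg1] at hzero
    have hz : z₂ * Complex.exp (-(F 1)) = z₁ := by linear_combination -hzero
    rw [Complex.exp_neg] at hz
    field_simp at hz ⊢
    rw [eq_comm, mul_comm] at hz
    linear_combination hz
  obtain ⟨n, hn⟩ : ∃ n : ℤ, F 1 = Complex.log (z₂ / z₁) + n * (2 * Real.pi * Complex.I) := by
    rw [← Complex.exp_eq_exp_iff_exists_int, hexp, Complex.exp_log hw0]
  -- abs (log w) ≤ abs (F 1)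
  have habs : ‖Complex.log (z₂ / z₁)‖ ≤ ‖F 1‖ := by
    rw [Complex.norm_def, Complex.norm_def, Complex.normSq_apply, Complex.normSq_apply, hn]
    have hre : (Complex.log (z₂ / z₁) + n * (2 * Real.pi * Complex.I)).re
        = (Complex.log (z₂ / z₁)).re := by simp
    have him : (Complex.log (z₂ / z₁) + n * (2 * Real.pi * Complex.I)).im
        = (Complex.log (z₂ / z₁)).im + n * (2 * Real.pi) := by simp
    rw [hre, him]
    apply Real.sqrt_le_sqrt
    have harg : |(Complex.log (z₂ / z₁)).im| ≤ Real.pi := by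
      rw [Complex.log_im]; exact Complex.abs_arg_le_pi _
    rcases eq_or_ne n 0 with h | h
    · simp [h]
    · have h1 : (1:ℝ) ≤ |(n:ℝ)| := by
        rw [← Int.cast_abs]; exact_mod_cast Int.one_le_abs h
      have hpi := Real.pi_pos
      have h2 := abs_le.mp harg
      set a := (Complex.log (z₂ / z₁)).im
      have h5 : |(n:ℝ) * a| ≤ |(n:ℝ)| * Real.pi := by
        rw [abs_mul]
        exact mul_le_mul_of_nonneg_left harg (abs_nonneg _)
      have h6 : -(|(n:ℝ)| * Real.pi) ≤ (n:ℝ) * a := neg_le_of_neg_le (by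
        have := neg_abs_le ((n:ℝ) * a); linarith)
      have key : 0 ≤ (n:ℝ) * a + Real.pi * (n:ℝ)^2 := by
        nlinarith [_root_.sq_abs (n:ℝ), mul_le_mul_of_nonneg_left h1 (by positivity : (0:ℝ) ≤ Real.pi * |(n:ℝ)|)]
      nlinarith [key]
  refine habs.trans ?_
  have heq : ∀ t, ‖γ' t‖ / ‖γ t‖ = ‖f t‖ := by
    intro t
    rw [hf]
    simp [map_div₀]
  calc ‖F 1‖ = ‖∫ t in (0:ℝ)..1, f t‖ := rfl
    _ ≤ ∫ t in (0:ℝ)..1, ‖f t‖ :=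
        intervalIntegral.norm_integral_le_integral_norm (by norm_num)
    _ = ∫ t in (0:ℝ)..1, ‖γ' t‖ / ‖γ t‖ := by
        simp_rw [heq]

/-- Martin–Osgood formula: for `z₁, z₂ ∈ ℂ*` with `zₖ = rₖ e^{i tₖ}` and `θ ∈ [0,π]`
the convex angle between them, `k(z₁,z₂) = √((ln(r₂/r₁))² + θ²)`. -/
theorem stmt_2 (z₁ z₂ : ℂ) (h₁ : z₁ ≠ 0) (h₂ : z₂ ≠ 0) :
    qhDist z₁ z₂ =
      Real.sqrt ((Real.log (‖z₂‖ / ‖z₁‖))^2 +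
        |Complex.arg (z₂ / z₁)|^2) := by
  have hkey : Real.sqrt ((Real.log (‖z₂‖ / ‖z₁‖))^2 +
      |Complex.arg (z₂ / z₁)|^2) = ‖Complex.log (z₂ / z₁)‖ := by
    conv_rhs => rw [Complex.norm_def, Complex.normSq_apply, Complex.log_re, Complex.log_im]
    rw [norm_div]
    congr 1
    rw [_root_.sq_abs]
    ring
  rw [hkey, qhDist]
  refine IsLeast.csInf_eq ⟨qh_mem z₁ z₂ h₁ h₂, fun l hl => ?_⟩
  obtain ⟨γ, γ', hg0, hg1, hne, hd, hc', hl⟩ := hl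
  rw [hl]
  exact qh_lb z₁ z₂ h₁ h₂ γ γ' hg0 hg1 hne hd hc'
end

section
/- Let γ : [0, L] → ℂ be an arc-length parametrization of a curve with γ(0) = 0, γ'(0) = 1, and |γ'(t) − γ'(s)| ≤ l₁|t − s|^{μ}. Suppose additionally the arc-chord condition at 0: s ≤ b·|γ(s)| for all small s. Write γ(s) = R(s)e^{iΨ(s)} with Ψ(s) → 0 as s → 0⁺. Then there exist ε > 0 and a constant c = (π/2)·l₁·b^{1+μ} such that |Ψ(s)| ≤ c·R(s)^{μ} for all 0 < s < ε. -/
open Set Complex Filter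

/-- If `γ` is a `μ`-Lyapunov arc-length parametrization with `γ(0) = 0`, `γ'(0) = 1`,
satisfying the arc-chord condition `s ≤ b|γ(s)|` for small `s`, and `Ψ` is a continuous
branch of `arg γ(s)` with `Ψ(s) → 0` as `s → 0⁺`, then there is `ε > 0` with
`|Ψ(s)| ≤ (π/2) l₁ b^{1+μ} |γ(s)|^μ` for `0 < s < ε`. -/
theorem stmt_9 (L l₁ μ b : ℝ) (hL : 0 < L) (hl₁ : 0 < l₁) (hμ0 : 0 < μ) (hμ1 : μ < 1)
    (hb : 0 < b)
    (γ g : ℝ → ℂ) (h0 : γ 0 = 0) (hg0 : g 0 = 1)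
    (hderiv : ∀ s ∈ Set.Icc (0:ℝ) L, HasDerivAt γ (g s) s)
    (hlyap : ∀ s ∈ Set.Icc (0:ℝ) L, ∀ t ∈ Set.Icc (0:ℝ) L,
      ‖g t - g s‖ ≤ l₁ * |t - s| ^ μ)
    (δ : ℝ) (hδ : 0 < δ)
    (harcchord : ∀ s ∈ Set.Ioc (0:ℝ) δ, s ≤ L → s ≤ b * ‖γ s‖)
    (Ψ : ℝ → ℝ)
    (hpolar : ∀ s ∈ Set.Ioc (0:ℝ) L, γ s = (‖γ s‖ : ℂ) * Complex.exp (Complex.I * Ψ s))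
    (hΨcont : ContinuousOn Ψ (Set.Ioc (0:ℝ) L))
    (hΨ0 : Tendsto Ψ (nhdsWithin 0 (Set.Ioi (0:ℝ))) (nhds 0)) :
    ∃ ε > 0, ∀ s : ℝ, 0 < s → s < ε → s ≤ L →
      |Ψ s| ≤ (Real.pi / 2) * l₁ * b ^ (1 + μ) * (‖γ s‖) ^ μ := by
  have hπ := Real.pi_pos
  -- continuity of g on Icc 0 L
  have hgcont : ContinuousOn g (Set.Icc 0 L) := by
    intro s hs
    rw [ContinuousWithinAt, tendsto_iff_dist_tendsto_zero]
    have hbd : Tendsto (fun t => l₁ * |t - s| ^ μ) (nhdsWithin s (Set.Icc 0 L)) (nhds 0) := by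
      have h1 : Tendsto (fun t : ℝ => |t - s|) (nhds s) (nhds |s - s|) :=
        ((continuous_id.sub continuous_const).abs.tendsto s)
      rw [sub_self, abs_zero] at h1
      have h2 : Tendsto (fun t : ℝ => l₁ * |t - s| ^ μ) (nhds s)
          (nhds (l₁ * (0:ℝ) ^ μ)) :=
        (((Real.continuousAt_rpow_const 0 μ (Or.inr hμ0.le)).tendsto.comp h1).const_mul l₁)
      simpa [Real.zero_rpow hμ0.ne'] using h2.mono_left nhdsWithin_le_nhds
    apply squeeze_zero' (Filter.Eventually.of_forall fun t => dist_nonneg) _ hbd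
    filter_upwards [self_mem_nhdsWithin] with t ht
    rw [dist_eq_norm]
    simpa using hlyap s hs t ht
  -- bound on the imaginary part
  have him : ∀ s ∈ Set.Icc (0:ℝ) L, |(γ s).im| ≤ l₁ * s ^ (1 + μ) := by
    intro s hs
    rcases eq_or_lt_of_le hs.1 with rfl | hspos
    · simp [h0, Real.zero_rpow (by linarith : 1 + μ ≠ 0)]
    have hsub : Set.uIcc (0:ℝ) s ⊆ Set.Icc 0 L := by
      rw [Set.uIcc_of_le hs.1]
      exact Set.Icc_subset_Icc le_rfl hs.2
    have hint : (∫ t in (0:ℝ)..s, (g t).im) = (γ s).im - (γ 0).im :=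
      intervalIntegral.integral_eq_sub_of_hasDerivAt
        (fun t ht => (Complex.imCLM.hasFDerivAt.comp_hasDerivAt t (hderiv t (hsub ht))))
        (((Complex.continuous_im.comp_continuousOn hgcont).mono hsub).intervalIntegrable)
    have hbound : ‖∫ t in (0:ℝ)..s, (g t).im‖ ≤ (l₁ * s ^ μ) * |s - 0| := by
      apply intervalIntegral.norm_integral_le_of_norm_le_const
      intro t ht
      rw [Set.uIoc_of_le hs.1] at ht
      have ht0 : (0:ℝ) ≤ t := ht.1.le
      have htL : t ∈ Set.Icc (0:ℝ) L := ⟨ht0, ht.2.trans hs.2⟩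
      have h1 : |(g t).im| ≤ ‖g t - g 0‖ := by
        have := Complex.abs_im_le_norm (g t - g 0)
        simpa [hg0] using this
      have h2 : ‖g t - g 0‖ ≤ l₁ * |t - 0| ^ μ :=
        hlyap 0 (Set.left_mem_Icc.2 hL.le) t htL
      have h3 : |t - 0| ^ μ ≤ s ^ μ := by
        rw [sub_zero, _root_.abs_of_nonneg ht0]
        exact Real.rpow_le_rpow ht0 ht.2 hμ0.le
      calc ‖(g t).im‖ = |(g t).im| := rfl
        _ ≤ l₁ * |t - 0| ^ μ := h1.trans h2
        _ ≤ l₁ * s ^ μ := by nlinarith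
    rw [hint, h0] at hbound
    have heq : (l₁ * s ^ μ) * |s - 0| = l₁ * s ^ (1 + μ) := by
      rw [sub_zero, _root_.abs_of_nonneg hs.1, add_comm, Real.rpow_add hspos, Real.rpow_one]
      ring
    rw [heq] at hbound
    simpa using hbound
  -- choose ε
  have hball : Metric.ball (0:ℝ) (Real.pi/2) ∈ nhds (0:ℝ) :=
    Metric.ball_mem_nhds _ (by positivity)
  obtain ⟨ε₁, hε₁, hsub⟩ := Metric.mem_nhdsWithin_iff.mp (hΨ0 hball)
  refine ⟨min ε₁ δ, lt_min hε₁ hδ, ?_⟩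
  intro s hs hsε hsL
  have hsδ : s ≤ δ := (hsε.trans_le (min_le_right _ _)).le
  have hΨle : |Ψ s| ≤ Real.pi/2 := by
    have hmem : s ∈ Metric.ball (0:ℝ) ε₁ ∩ Set.Ioi 0 := by
      constructor
      · rw [Metric.mem_ball, Real.dist_eq, sub_zero, _root_.abs_of_pos hs]
        exact hsε.trans_le (min_le_left _ _)
      · exact hs
    have := hsub hmem
    rw [Set.mem_preimage, Metric.mem_ball, Real.dist_eq, sub_zero] at this
    exact this.le
  set R := ‖γ s‖ with hRdef
  have harc : s ≤ b * R := harcchord s ⟨hs, hsδ⟩ hsL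
  have hR0 : (0:ℝ) ≤ R := norm_nonneg _
  have hR : 0 < R := by nlinarith
  have himeq : (γ s).im = R * Real.sin (Ψ s) := by
    rw [hRdef, hpolar s ⟨hs, hsL⟩, mul_comm Complex.I]
    simp [Complex.mul_im, Complex.exp_ofReal_mul_I_re, Complex.exp_ofReal_mul_I_im]
  -- Jordan inequality
  have hsinabs : Real.sin |Ψ s| = |Real.sin (Ψ s)| := by
    rcases le_or_gt 0 (Ψ s) with h | h
    · rw [_root_.abs_of_nonneg h, _root_.abs_of_nonneg]
      exact Real.sin_nonneg_of_nonneg_of_le_pi h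
        (by rw [_root_.abs_of_nonneg h] at hΨle; linarith)
    · have hn : 0 ≤ Real.sin (-(Ψ s)) := by
        apply Real.sin_nonneg_of_nonneg_of_le_pi (by linarith)
        rw [_root_.abs_of_neg h] at hΨle; linarith
      rw [Real.sin_neg] at hn
      rw [_root_.abs_of_neg h, Real.sin_neg, _root_.abs_of_nonpos (by linarith)]
  have hjordan : |Ψ s| ≤ Real.pi/2 * |Real.sin (Ψ s)| := by
    have h1 : 2/Real.pi * |Ψ s| ≤ Real.sin |Ψ s| :=
      Real.mul_le_sin (abs_nonneg _) hΨle
    rw [hsinabs, div_mul_eq_mul_div, div_le_iff₀ hπ] at h1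
    nlinarith
  -- main computation
  have hs1 : s ^ (1+μ) ≤ (b*R) ^ (1+μ) :=
    Real.rpow_le_rpow hs.le harc (by linarith)
  have hbr : (b*R) ^ (1+μ) = b^(1+μ) * R^(1+μ) := Real.mul_rpow hb.le hR0
  have hRsplit : R^(1+μ) = R * R^μ := by
    rw [Real.rpow_add hR, Real.rpow_one]
  have key : R * |Ψ s| ≤ R * (Real.pi/2 * l₁ * b^(1+μ) * R^μ) := by
    calc R * |Ψ s| ≤ R * (Real.pi/2 * |Real.sin (Ψ s)|) :=
          mul_le_mul_of_nonneg_left hjordan hR0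
      _ = Real.pi/2 * |R * Real.sin (Ψ s)| := by
          rw [abs_mul, _root_.abs_of_nonneg hR0]; ring
      _ = Real.pi/2 * |(γ s).im| := by rw [himeq]
      _ ≤ Real.pi/2 * (l₁ * s^(1+μ)) :=
          mul_le_mul_of_nonneg_left (him s ⟨hs.le, hsL⟩) (by positivity)
      _ ≤ Real.pi/2 * (l₁ * (b^(1+μ) * (R * R^μ))) := by
          rw [← hRsplit, ← hbr]
          exact mul_le_mul_of_nonneg_left
            (mul_le_mul_of_nonneg_left hs1 hl₁.le) (by positivity)
      _ = R * (Real.pi/2 * l₁ * b^(1+μ) * R^μ) := by ring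
  exact le_of_mul_le_mul_left key hR
end

section
/- Suppose h is a (complex-valued) Euclidean harmonic mapping of the unit disk 𝔻 onto a bounded domain D = h(𝔻) that contains the disk B(h(0), R₀), and suppose there is a closed half-plane H_b containing D whose boundary line passes through the point b ∈ ∂D. Then dist(h(z), b) ≥ (1/2)·R₀·(1 − |z|) for all z ∈ 𝔻. -/
open Complex Metric Set Filter Topology NNReal ENNReal

/-- `u` is harmonic on `s`: it is `C²` there and its Laplacian vanishes. -/
def HarmonicOn' (u : ℂ → ℝ) (s : Set ℂ) : Prop :=
  ContDiffOn ℝ 2 u s ∧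
  ∀ z ∈ s, fderiv ℝ (fun w => fderiv ℝ u w 1) z 1 +
      fderiv ℝ (fun w => fderiv ℝ u w Complex.I) z Complex.I = 0

lemma clm_ext_complex' {F : Type*} [NormedAddCommGroup F] [NormedSpace ℝ F]
    {T S : ℂ →L[ℝ] F} (h1 : T 1 = S 1) (h2 : T I = S I) : T = S := by
  ext w
  have hw : w = w.re • (1:ℂ) + w.im • I := by
    simp [Complex.real_smul, Complex.re_add_im]
  rw [hw, map_add, map_add]
  rw [map_smul, map_smul, map_smul, map_smul, h1, h2]


lemma g_hasDerivAt {u : ℂ → ℝ} {s : Set ℂ} (hs : IsOpen s) (hu : HarmonicOn' u s)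
    {z : ℂ} (hz : z ∈ s) :
    ∃ c, HasDerivAt (fun w => ((fderiv ℝ u w 1 : ℝ) : ℂ) - I * ((fderiv ℝ u w I : ℝ) : ℂ)) c z := by
  obtain ⟨hC2, hlap⟩ := hu
  have hu' : ContDiffOn ℝ 1 (fderiv ℝ u) s := hC2.fderiv_of_isOpen hs (by norm_num)
  have hdiff : DifferentiableAt ℝ (fderiv ℝ u) z :=
    (hu'.differentiableOn (by norm_num)).differentiableAt (hs.mem_nhds hz)
  set D2 := fderiv ℝ (fderiv ℝ u) z with hD2def
  have hD2 : HasFDerivAt (fderiv ℝ u) D2 z := hdiff.hasFDerivAt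
  -- symmetry
  have hev : ∀ᶠ y in 𝓝 z, HasFDerivAt u (fderiv ℝ u y) y := by
    filter_upwards [hs.mem_nhds hz] with y hy
    exact (((hC2.differentiableOn (by norm_num)).differentiableAt (hs.mem_nhds hy)).hasFDerivAt)
  have hsymm : ∀ v w, D2 v w = D2 w v := second_derivative_symmetric_of_eventually hev hD2
  -- pointwise derivative facts
  have h1 : HasFDerivAt (fun w => fderiv ℝ u w 1)
      ((ContinuousLinearMap.apply ℝ ℝ (1:ℂ)).comp D2) z :=
    (ContinuousLinearMap.apply ℝ ℝ (1:ℂ)).hasFDerivAt.comp z hD2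
  have h2 : HasFDerivAt (fun w => fderiv ℝ u w I)
      ((ContinuousLinearMap.apply ℝ ℝ (I:ℂ)).comp D2) z :=
    (ContinuousLinearMap.apply ℝ ℝ (I:ℂ)).hasFDerivAt.comp z hD2
  -- Laplace in terms of D2
  have hlap' : D2 1 1 + D2 I I = 0 := by
    have e1 : fderiv ℝ (fun w => fderiv ℝ u w 1) z = (ContinuousLinearMap.apply ℝ ℝ (1:ℂ)).comp D2 :=
      h1.fderiv
    have e2 : fderiv ℝ (fun w => fderiv ℝ u w I) z = (ContinuousLinearMap.apply ℝ ℝ (I:ℂ)).comp D2 :=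
      h2.fderiv
    have := hlap z hz
    rw [e1, e2] at this
    simpa using this
  -- real fderiv of g
  have h1' : HasFDerivAt (fun w => ((fderiv ℝ u w 1 : ℝ) : ℂ))
      (Complex.ofRealCLM.comp ((ContinuousLinearMap.apply ℝ ℝ (1:ℂ)).comp D2)) z :=
    Complex.ofRealCLM.hasFDerivAt.comp z h1
  have h2' : HasFDerivAt (fun w => ((fderiv ℝ u w I : ℝ) : ℂ))
      (Complex.ofRealCLM.comp ((ContinuousLinearMap.apply ℝ ℝ (I:ℂ)).comp D2)) z :=
    Complex.ofRealCLM.hasFDerivAt.comp z h2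
  have h2'' : HasFDerivAt (fun w => I * ((fderiv ℝ u w I : ℝ) : ℂ))
      (I • (Complex.ofRealCLM.comp ((ContinuousLinearMap.apply ℝ ℝ (I:ℂ)).comp D2))) z :=
    h2'.const_mul I
  set M : ℂ →L[ℝ] ℂ :=
    Complex.ofRealCLM.comp ((ContinuousLinearMap.apply ℝ ℝ (1:ℂ)).comp D2)
      - I • (Complex.ofRealCLM.comp ((ContinuousLinearMap.apply ℝ ℝ (I:ℂ)).comp D2)) with hMdef
  have hM : HasFDerivAt (fun w => ((fderiv ℝ u w 1 : ℝ) : ℂ) - I * ((fderiv ℝ u w I : ℝ) : ℂ)) M z :=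
    h1'.sub h2''
  set c : ℂ := ((D2 1 1 : ℝ) : ℂ) - I * ((D2 1 I : ℝ) : ℂ) with hcdef
  refine ⟨c, ?_⟩
  have hrs : (ContinuousLinearMap.smulRight (1 : ℂ →L[ℂ] ℂ) c).restrictScalars ℝ = M := by
    apply clm_ext_complex'
    · simp [hMdef, hcdef, sub_eq_add_neg]
    · have hMI : M I = ((D2 I 1 : ℝ) : ℂ) - I * ((D2 I I : ℝ) : ℂ) := by
        simp [hMdef, sub_eq_add_neg]
      have : ((ContinuousLinearMap.smulRight (1 : ℂ →L[ℂ] ℂ) c).restrictScalars ℝ) I = I * c := by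
        simp [mul_comm]
      rw [this, hMI, hsymm I 1]
      have hII : (D2 I I : ℝ) = -(D2 1 1) := by linarith
      rw [hII, hcdef]
      push_cast
      ring_nf
      rw [Complex.I_sq]
      ring
  exact hasFDerivAt_of_restrictScalars _ hM hrs

lemma primitive_re_eq {u : ℂ → ℝ} (hu : HarmonicOn' u (ball 0 1))
    {R R₂ : ℝ≥0} (hR2pos : 0 < (R₂:ℝ)) (hR2R : (R₂:ℝ) < R) (hR1 : (R:ℝ) < 1) :
    ∃ f : ℂ → ℂ, DifferentiableOn ℂ f (ball 0 (R₂:ℝ)) ∧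
      (∀ y ∈ ball (0:ℂ) (R₂:ℝ), (f y).re = u y) ∧ f 0 = ((u 0 : ℝ) : ℂ) := by
  set g : ℂ → ℂ := fun w => ((fderiv ℝ u w 1 : ℝ) : ℂ) - I * ((fderiv ℝ u w I : ℝ) : ℂ) with hgdef
  have hRpos : 0 < R := by exact_mod_cast hR2pos.trans hR2R
  have hgdiff : DifferentiableOn ℂ g (closedBall 0 (R:ℝ)) := by
    intro y hy
    obtain ⟨c, hc⟩ := g_hasDerivAt isOpen_ball hu (mem_ball_zero_iff.2
      (lt_of_le_of_lt (mem_closedBall_zero_iff.1 hy) hR1))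
    exact hc.differentiableAt.differentiableWithinAt
  have hp : HasFPowerSeriesOnBall g (cauchyPowerSeries g 0 R) 0 R :=
    hgdiff.hasFPowerSeriesOnBall hRpos
  set p := cauchyPowerSeries g 0 R with hpdef
  set a : ℕ → ℂ := fun n => p.coeff n with hadef
  -- summable bound
  have hsum : Summable (fun n => ‖p n‖ * (R₂:ℝ)^n) :=
    p.summable_norm_mul_pow (lt_of_lt_of_le (by exact_mod_cast hR2R) hp.r_le)
  -- sum identity on ball R₂
  have hgsum : ∀ y ∈ ball (0:ℂ) (R₂:ℝ), HasSum (fun n => a n * y ^ n) (g y) := by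
    intro y hy
    have hy' : y ∈ Metric.eball (0:ℂ) (R : ℝ≥0∞) := by
      have hlt : ‖y‖ < (R:ℝ) := lt_trans (mem_ball_zero_iff.1 hy) hR2R
      rw [EMetric.mem_ball, edist_zero_right]
      exact_mod_cast hlt
    have := hp.hasSum hy'
    simp only [zero_add, FormalMultilinearSeries.apply_eq_pow_smul_coeff, smul_eq_mul] at this
    convert this using 2 with n
    · rfl
    ring
  -- the primitive
  set F : ℂ → ℂ := fun y => ∑' n, (a n / (n+1)) * y ^ (n+1) with hFdef
  have hF0 : F 0 = 0 := by
    rw [hFdef]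
    simp
  have hFderiv : ∀ y ∈ ball (0:ℂ) (R₂:ℝ), HasDerivAt F (g y) y := by
    intro y hy
    have key : HasDerivAt (fun x => ∑' n, (a n / (n+1)) * x ^ (n+1)) (∑' n, a n * y ^ n) y := by
      apply hasDerivAt_tsum_of_isPreconnected hsum isOpen_ball
        (convex_ball (0:ℂ) (R₂:ℝ)).isPreconnected
        (g := fun n x => (a n / (n+1)) * x ^ (n+1)) (g' := fun n x => a n * x ^ n)
        (y₀ := 0) ?_ ?_ (mem_ball_self hR2pos) ?_ hy
      · intro n x _
        have h1 : HasDerivAt (fun x : ℂ => x ^ (n+1)) ((n+1 : ℕ) * x ^ n) x := by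
          simpa using hasDerivAt_pow (n+1) x
        have := h1.const_mul (a n / (n+1))
        convert this using 1
        · rfl
        have hne : ((n:ℂ) + 1) ≠ 0 := Nat.cast_add_one_ne_zero n
        push_cast
        field_simp
      · intro n x hx
        have hxn : ‖x‖ ≤ (R₂:ℝ) := le_of_lt (mem_ball_zero_iff.1 hx)
        calc ‖a n * x ^ n‖ = ‖a n‖ * ‖x‖^n := by simp [norm_mul, norm_pow]
          _ ≤ ‖p n‖ * (R₂:ℝ)^n := by
              apply mul_le_mul ?_ (pow_le_pow_left₀ (norm_nonneg x) hxn n) (by positivity)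
                (norm_nonneg _)
              calc ‖a n‖ = ‖p n (fun _ => (1:ℂ))‖ := rfl
                _ ≤ ‖p n‖ := by simpa using (p n).le_opNorm (fun _ => (1:ℂ))
      · apply Summable.congr summable_zero
        intro n
        simp
    have : (∑' n, a n * y ^ n) = g y := (hgsum y hy).tsum_eq
    rw [← this]
    exact key
  -- real part agrees with u up to constant
  have hre : ∀ y ∈ ball (0:ℂ) (R₂:ℝ), (F y).re + u 0 = u y := by
    have hball1 : ball (0:ℂ) (R₂:ℝ) ⊆ ball 0 1 := by
      apply ball_subset_ball
      linarith
    have hudiff : ∀ y ∈ ball (0:ℂ) (R₂:ℝ), HasFDerivAt u (fderiv ℝ u y) y := by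
      intro y hy
      exact ((hu.1.differentiableOn (by norm_num)).differentiableAt
        (isOpen_ball.mem_nhds (hball1 hy))).hasFDerivAt
    set φ : ℂ → ℝ := fun y => (F y).re - u y with hφdef
    have hφderiv : ∀ y ∈ ball (0:ℂ) (R₂:ℝ), HasFDerivAt φ (0 : ℂ →L[ℝ] ℝ) y := by
      intro y hy
      have hF : HasFDerivAt F ((ContinuousLinearMap.smulRight (1 : ℂ →L[ℂ] ℂ)
          (g y)).restrictScalars ℝ) y := ((hFderiv y hy).hasFDerivAt).restrictScalars ℝ
      have hFre : HasFDerivAt (fun x => (F x).re)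
          (Complex.reCLM.comp ((ContinuousLinearMap.smulRight (1 : ℂ →L[ℂ] ℂ)
            (g y)).restrictScalars ℝ)) y := Complex.reCLM.hasFDerivAt.comp y hF
      have heq : Complex.reCLM.comp ((ContinuousLinearMap.smulRight (1 : ℂ →L[ℂ] ℂ)
          (g y)).restrictScalars ℝ) = fderiv ℝ u y := by
        apply clm_ext_complex'
        · simp [hgdef]
        · simp [hgdef]
      have := hFre.sub (hudiff y hy)
      rw [heq, sub_self] at this
      exact this
    have hconst : ∀ y ∈ ball (0:ℂ) (R₂:ℝ), φ y = φ 0 := by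
      intro y hy
      apply (convex_ball (0:ℂ) (R₂:ℝ)).is_const_of_fderivWithin_eq_zero
        (fun x hx => ((hφderiv x hx).differentiableAt).differentiableWithinAt)
        (fun x hx => ?_) hy (mem_ball_self hR2pos)
      rw [fderivWithin_of_isOpen isOpen_ball hx]
      exact (hφderiv x hx).fderiv
    intro y hy
    have := hconst y hy
    simp only [hφdef, hF0, Complex.zero_re, zero_sub] at this
    linarith
  refine ⟨fun y => F y + ((u 0 : ℝ) : ℂ), ?_, ?_, ?_⟩
  · intro y hy
    exact (((hFderiv y hy).hasFDerivAt.differentiableAt).add_const _).differentiableWithinAt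
  · intro y hy
    have := hre y hy
    simpa using this
  · simp [hF0]

set_option maxHeartbeats 1000000 in
lemma harnack {u : ℂ → ℝ} (hu : HarmonicOn' u (ball 0 1))
    (hpos : ∀ z ∈ ball (0:ℂ) 1, 0 ≤ u z) {z : ℂ} (hz : z ∈ ball (0:ℂ) 1) :
    (1/2) * u 0 * (1 - ‖z‖) ≤ u z := by
  set ρ := ‖z‖ with hρdef
  have hρ0 : 0 ≤ ρ := norm_nonneg z
  have hρ1 : ρ < 1 := mem_ball_zero_iff.1 hz
  have hu0 : 0 ≤ u 0 := hpos 0 (mem_ball_self one_pos)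
  have huz : 0 ≤ u z := hpos z hz
  -- key estimate with parameters
  have key2 : ∀ δ ε' : ℝ, 0 < δ → δ < 1 - ρ → 0 < ε' →
      (1 - δ - ρ) * (u 0 + ε') ≤ (1 + ρ) * (u z + ε') := by
    intro δ ε' hδ hδρ hε'
    have hR2pos : (0:ℝ) < 1 - δ := by linarith
    have hRpos : (0:ℝ) < 1 - δ/2 := by linarith
    set R₂ : ℝ≥0 := Real.toNNReal (1 - δ) with hR₂def
    set R : ℝ≥0 := Real.toNNReal (1 - δ/2) with hRdef
    have hR₂coe : (R₂:ℝ) = 1 - δ := Real.coe_toNNReal _ hR2pos.le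
    have hRcoe : (R:ℝ) = 1 - δ/2 := Real.coe_toNNReal _ hRpos.le
    obtain ⟨f, hfdiff, hfre, hf0⟩ := primitive_re_eq hu (R := R) (R₂ := R₂)
      (by rw [hR₂coe]; linarith) (by rw [hR₂coe, hRcoe]; linarith) (by rw [hRcoe]; linarith)
    rw [hR₂coe] at hfdiff hfre
    have hballsub : ball (0:ℂ) (1-δ) ⊆ ball 0 1 := ball_subset_ball (by linarith)
    -- positivity of denominators
    set a : ℝ := u 0 + ε' with hadef
    have ha : 0 < a := by positivity
    set ψ : ℂ → ℂ := fun w => (f w + ε' - a) / (f w + ε' + a) with hψdef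
    have hden : ∀ w ∈ ball (0:ℂ) (1-δ), 0 < (f w + ε' + a).re := by
      intro w hw
      have := hpos w (hballsub hw)
      have hre := hfre w hw
      simp only [Complex.add_re, Complex.ofReal_re]
      rw [hre]
      simp only [hadef]
      norm_num
      linarith
    have hdenne : ∀ w ∈ ball (0:ℂ) (1-δ), f w + ε' + a ≠ 0 := by
      intro w hw hcontra
      have := hden w hw
      rw [hcontra] at this
      simp at this
    -- ψ is differentiable
    have hψdiff : DifferentiableOn ℂ ψ (ball 0 (1-δ)) := by
      apply DifferentiableOn.div
      · exact (hfdiff.add_const _).sub_const _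
      · exact (hfdiff.add_const _).add_const _
      · intro w hw
        exact hdenne w hw
    have hψ0 : ψ 0 = 0 := by
      simp only [hψdef, hf0, hadef]
      have hnum : ((u 0 : ℂ) + (ε':ℂ) - ((u 0 + ε' : ℝ) : ℂ)) = 0 := by push_cast; ring
      rw [hnum, zero_div]
    -- maps to unit ball
    have hmaps : MapsTo ψ (ball 0 (1-δ)) (ball (ψ 0) 1) := by
      rw [hψ0]
      intro w hw
      rw [mem_ball_zero_iff]
      have hd := hden w hw
      have hdne := hdenne w hw
      have hx := hpos w (hballsub hw)
      have hre := hfre w hw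
      rw [hψdef]
      simp only [norm_div]
      rw [div_lt_one (norm_pos_iff.2 hdne)]
      have hsq : Complex.normSq (f w + ε' - a) < Complex.normSq (f w + ε' + a) := by
        simp only [Complex.normSq_apply, Complex.add_re, Complex.sub_re, Complex.add_im,
          Complex.sub_im, Complex.ofReal_re, Complex.ofReal_im]
        have h1 : (f w).re = u w := hre
        nlinarith [ha, hx]
      have := Real.sqrt_lt_sqrt (Complex.normSq_nonneg _) hsq
      simpa [Complex.norm_def] using this
    -- Schwarz
    have hz2 : z ∈ ball (0:ℂ) (1-δ) := mem_ball_zero_iff.2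
      (by rw [← hρdef]; linarith)
    have hSchwarz := Complex.dist_le_div_mul_dist_of_mapsTo_ball hψdiff (hmaps.mono_right ball_subset_closedBall) hz2
    rw [hψ0, dist_zero_right, dist_zero_right] at hSchwarz
    -- unfold: ‖ψ z‖ ≤ 1/(1-δ) * ρ
    set r : ℝ := ρ / (1 - δ) with hrdef
    have hr0 : 0 ≤ r := by positivity
    have hr1 : r < 1 := by
      rw [hrdef, div_lt_one hR2pos]
      linarith
    have hψz : ‖ψ z‖ ≤ r := by
      rw [hrdef]
      rw [← hρdef] at hSchwarz
      calc ‖ψ z‖ ≤ 1/(1-δ) * ρ := hSchwarz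
        _ = ρ / (1-δ) := by ring
    -- algebra
    have hd := hden z hz2
    have hdne := hdenne z hz2
    have hre := hfre z hz2
    have habs : ‖f z + ε' - a‖ ≤ r * ‖f z + ε' + a‖ := by
      have := hψz
      rw [hψdef] at this
      simp only [norm_div] at this
      rw [div_le_iff₀ (norm_pos_iff.2 hdne)] at this
      linarith [this]
    have hsq : Complex.normSq (f z + ε' - a) ≤ r^2 * Complex.normSq (f z + ε' + a) := by
      have h1 := habs
      have h2 : ‖f z + ε' - a‖^2 ≤ (r * ‖f z + ε' + a‖)^2 :=
        pow_le_pow_left₀ (norm_nonneg _) h1 2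
      rw [Complex.sq_norm] at h2
      calc Complex.normSq (f z + ε' - a) ≤ (r * ‖f z + ε' + a‖)^2 := h2
        _ = r^2 * ‖f z + ε' + a‖^2 := by ring
        _ = r^2 * Complex.normSq (f z + ε' + a) := by rw [Complex.sq_norm]
    set x : ℝ := u z + ε' with hxdef
    have hxpos : 0 < x := by positivity
    have hkey : (1 - r) * a ≤ (1 + r) * x := by
      have hexp : (x - a)^2 + (f z).im^2 ≤ r^2 * ((x + a)^2 + (f z).im^2) := by
        have := hsq
        simp only [Complex.normSq_apply, Complex.add_re, Complex.sub_re, Complex.add_im,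
          Complex.sub_im, Complex.ofReal_re, Complex.ofReal_im, hre] at this
        convert this using 2 <;> simp [hxdef] <;> ring
      have hr2 : 0 ≤ (1 - r^2) * (f z).im^2 :=
        mul_nonneg (by nlinarith [hr0, hr1]) (sq_nonneg _)
      have h5 : (x - a)^2 ≤ (r*(x+a))^2 := by nlinarith [hexp, hr2]
      have h7 : 0 ≤ r*(x+a) := by positivity
      nlinarith [h5, h7, mul_pos hxpos ha]
    -- translate r back
    have e1 : r * (1-δ) = ρ := by
      rw [hrdef]
      exact div_mul_cancel₀ _ (ne_of_gt hR2pos)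
    have h1 : (1 - r) * a * (1-δ) ≤ (1 + r) * x * (1-δ) :=
      mul_le_mul_of_nonneg_right hkey hR2pos.le
    have h2 : (1 - r) * a * (1-δ) = (1 - δ - ρ) * a := by linear_combination (-a) * e1
    have h3 : (1 + r) * x * (1-δ) = (1 - δ + ρ) * x := by linear_combination x * e1
    rw [h2, h3] at h1
    calc (1 - δ - ρ) * (u 0 + ε') = (1-δ-ρ) * a := by rw [hadef]
      _ ≤ (1-δ+ρ) * x := h1
      _ ≤ (1+ρ) * x := by nlinarith [hxpos, hδ]
      _ = (1+ρ) * (u z + ε') := by rw [hxdef]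
  -- pass to the limit
  have key : (1 - ρ) * u 0 ≤ (1 + ρ) * u z := by
    apply _root_.le_of_forall_pos_le_add
    intro ε hε
    set δ : ℝ := min ((1-ρ)/2) (ε / (2 * (u 0 + 1))) with hδdef
    have hδpos : 0 < δ := by
      apply lt_min (by linarith)
      positivity
    have hδρ : δ < 1 - ρ := lt_of_le_of_lt (min_le_left _ _) (by linarith)
    have hδε : δ * (u 0 + 1) ≤ ε/2 := by
      have := min_le_right ((1-ρ)/2) (ε / (2 * (u 0 + 1)))
      calc δ * (u 0 + 1) ≤ (ε / (2 * (u 0 + 1))) * (u 0 + 1) := by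
            apply mul_le_mul_of_nonneg_right this (by linarith)
        _ = ε/2 := by field_simp
    set ε' : ℝ := ε/4 with hε'def
    have := key2 δ ε' hδpos hδρ (by positivity)
    nlinarith [hδpos, hρ0, hρ1, hu0, huz, hδε]
  nlinarith [key, huz, hρ1, hρ0, hu0]

lemma harmonic_comb {u v : ℂ → ℝ} {s : Set ℂ} (hs : IsOpen s)
    (hu : HarmonicOn' u s) (hv : HarmonicOn' v s) (α β c : ℝ) :
    HarmonicOn' (fun z => α * u z + β * v z + c) s := by
  obtain ⟨hu1, hu2⟩ := hu
  obtain ⟨hv1, hv2⟩ := hv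
  have hudiff : ∀ w ∈ s, HasFDerivAt u (fderiv ℝ u w) w := fun w hw =>
    ((hu1.differentiableOn (by norm_num)).differentiableAt (hs.mem_nhds hw)).hasFDerivAt
  have hvdiff : ∀ w ∈ s, HasFDerivAt v (fderiv ℝ v w) w := fun w hw =>
    ((hv1.differentiableOn (by norm_num)).differentiableAt (hs.mem_nhds hw)).hasFDerivAt
  have hcomb : ∀ w ∈ s, HasFDerivAt (fun z => α * u z + β * v z + c)
      (α • fderiv ℝ u w + β • fderiv ℝ v w) w := by
    intro w hw
    exact (((hudiff w hw).const_mul α).add ((hvdiff w hw).const_mul β)).add_const c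
  constructor
  · exact ((contDiffOn_const.mul hu1).add (contDiffOn_const.mul hv1)).add contDiffOn_const
  · intro z hz
    -- fderiv identity, eventually
    have hev : ∀ e : ℂ, (fun w => fderiv ℝ (fun z => α * u z + β * v z + c) w e)
        =ᶠ[𝓝 z] (fun w => α * (fderiv ℝ u w e) + β * (fderiv ℝ v w e)) := by
      intro e
      filter_upwards [hs.mem_nhds hz] with w hw
      rw [(hcomb w hw).fderiv]
      simp
    -- differentiability of the partials
    have hpart : ∀ (q : ℂ → ℝ), ContDiffOn ℝ 2 q s →
        ∀ e : ℂ, DifferentiableAt ℝ (fun w => fderiv ℝ q w e) z := by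
      intro q hq e
      have : ContDiffOn ℝ 1 (fderiv ℝ q) s := hq.fderiv_of_isOpen hs (by norm_num)
      have hd : DifferentiableAt ℝ (fderiv ℝ q) z :=
        (this.differentiableOn (by norm_num)).differentiableAt (hs.mem_nhds hz)
      exact ((ContinuousLinearMap.apply ℝ ℝ e).hasFDerivAt.comp z hd.hasFDerivAt).differentiableAt
    have keyd : ∀ e : ℂ, fderiv ℝ (fun w => fderiv ℝ (fun z => α * u z + β * v z + c) w e) z
        = α • fderiv ℝ (fun w => fderiv ℝ u w e) z + β • fderiv ℝ (fun w => fderiv ℝ v w e) z := by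
      intro e
      rw [Filter.EventuallyEq.fderiv_eq (hev e)]
      rw [fderiv_fun_add ((hpart u hu1 e).const_mul α) ((hpart v hv1 e).const_mul β)]
      rw [fderiv_const_mul (hpart u hu1 e), fderiv_const_mul (hpart v hv1 e)]
    rw [keyd 1, keyd Complex.I]
    simp only [ContinuousLinearMap.add_apply, ContinuousLinearMap.coe_smul', Pi.smul_apply,
      smul_eq_mul]
    have h1 := hu2 z hz
    have h2 := hv2 z hz
    linear_combination α * h1 + β * h2

/-- If `h` is a complex-valued harmonic map of the unit disk onto a bounded domain
`D = h(𝔻)` containing `B(h(0), R₀)`, and `D` lies in a closed half-plane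
`{w : ⟨w - b, n⟩ ≥ 0}` whose boundary line passes through `b ∈ ∂D`, then
`dist(h(z), b) ≥ (1/2) R₀ (1 - |z|)` on `𝔻`. -/
theorem stmt_11 (h : ℂ → ℂ) (D : Set ℂ) (R₀ : ℝ) (hR₀ : 0 < R₀) (b n : ℂ)
    (hharm_re : HarmonicOn' (fun z => (h z).re) (Metric.ball 0 1))
    (hharm_im : HarmonicOn' (fun z => (h z).im) (Metric.ball 0 1))
    (hD : D = h '' Metric.ball 0 1) (hbd : Bornology.IsBounded D)
    (hball : Metric.ball (h 0) R₀ ⊆ D)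
    (hn : ‖n‖ = 1)
    (hhalf : ∀ w ∈ D, 0 ≤ ((w - b) * (starRingEnd ℂ) n).re)
    (hbbd : b ∈ frontier D) :
    ∀ z ∈ Metric.ball (0:ℂ) 1, (1/2) * R₀ * (1 - ‖z‖) ≤ dist (h z) b := by
  intro z hz
  obtain ⟨u, hudef⟩ : ∃ u : ℂ → ℝ,
      u = fun z => n.re * (h z).re + n.im * (h z).im + (-((b * (starRingEnd ℂ) n).re)) := ⟨_, rfl⟩
  have hue : ∀ w : ℂ, ((w - b) * (starRingEnd ℂ) n).re
      = n.re * w.re + n.im * w.im + (-((b * (starRingEnd ℂ) n).re)) := by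
    intro w
    simp [Complex.mul_re, Complex.sub_re, Complex.sub_im, Complex.conj_re, Complex.conj_im]
    ring
  have hharm : HarmonicOn' u (ball 0 1) := by
    rw [hudef]
    exact harmonic_comb isOpen_ball hharm_re hharm_im n.re n.im _
  have hposu : ∀ w ∈ ball (0:ℂ) 1, 0 ≤ u w := by
    intro w hw
    have : h w ∈ D := by
      rw [hD]; exact mem_image_of_mem h hw
    have h0 := hhalf (h w) this
    rw [hue (h w)] at h0
    rw [hudef]
    exact h0
  have hnormSq : (n * (starRingEnd ℂ) n) = 1 := by
    rw [Complex.mul_conj]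
    rw [Complex.normSq_eq_norm_sq, hn]
    norm_num
  have hu0 : R₀ ≤ u 0 := by
    have hstep : ∀ t : ℝ, t < R₀ → t ≤ u 0 := by
      intro t ht
      rcases le_or_gt t 0 with h0 | h0
      · exact h0.trans (hposu 0 (mem_ball_self one_pos))
      · have hw : h 0 - (t:ℂ) * n ∈ ball (h 0) R₀ := by
          rw [mem_ball, dist_eq_norm]
          have : h 0 - (t:ℂ) * n - h 0 = -((t:ℂ)*n) := by ring
          rw [this, norm_neg]
          rw [norm_mul]
          rw [hn]
          simp [Complex.norm_real, abs_of_pos h0]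
          exact ht
        have hmem : h 0 - (t:ℂ) * n ∈ D := hball hw
        have h1 := hhalf _ hmem
        have h2 : ((h 0 - (t:ℂ)*n - b) * (starRingEnd ℂ) n)
            = ((h 0 - b) * (starRingEnd ℂ) n) - (t:ℂ) * (n * (starRingEnd ℂ) n) := by ring
        rw [h2, hnormSq] at h1
        have h3 : (((h 0 - b) * (starRingEnd ℂ) n) - (t:ℂ) * 1).re
            = ((h 0 - b) * (starRingEnd ℂ) n).re - t := by
          simp
        rw [h3, hue (h 0)] at h1
        have hu0e : u 0 = n.re * (h 0).re + n.im * (h 0).im + -(b * (starRingEnd ℂ) n).re := by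
          rw [hudef]
        rw [hu0e]
        linarith
    by_contra hcon
    push_neg at hcon
    have h4 : (u 0 + R₀)/2 < R₀ := by linarith
    have h5 := hstep _ h4
    linarith
  have hhar := harnack hharm hposu hz
  -- dist bound
  have hd : u z ≤ dist (h z) b := by
    have e1 : u z = ((h z - b) * (starRingEnd ℂ) n).re := by rw [hudef]; exact (hue (h z)).symm
    have e2 : ((h z - b) * (starRingEnd ℂ) n).re ≤ ‖(h z - b) * (starRingEnd ℂ) n‖ :=
      Complex.re_le_norm _
    have e3 : ‖(h z - b) * (starRingEnd ℂ) n‖ = ‖h z - b‖ := by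
      rw [norm_mul, Complex.norm_conj, hn, mul_one]
    rw [e1]
    rw [dist_eq_norm]
    rw [← e3]
    exact e2
  have hz1 : ‖z‖ < 1 := mem_ball_zero_iff.1 hz
  nlinarith [hhar, hd, hu0, hz1, norm_nonneg z]
end
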